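/- Uniformly bounded pseudo-inverse of the limiting Hessian: Let g : ℝ^p × ℝ^d → ℝ be three-times continuously differentiable, a parametric Morse-Bott function, L-smooth in y, and coercive in y, and let φ denote the flow selection. Fix (x₀,y) ∈ ℝ^p × ℝ^d and assume y₀ := φ(x₀,y) is a local minimizer of y' ↦ g(x₀,y'). Define A_∞(x,y) := ∂²_{yy} g(x, φ(x,y)). Then there exist an open neighborhood U of x₀ and a constant λ > 0 such that λ · ‖A_∞(x,y)^†‖_op ≤ 1 for all x ∈ U, where † denotes the Moore–Penrose pseudo-inverse and ‖·‖_op the operator norm. -/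

import Mathlib

noncomputable section

open Set Filter Topology Metric RealInnerProductSpace

abbrev Euc (n : ℕ) : Type := EuclideanSpace ℝ (Fin n)

variable {p d : ℕ}

/-- Gradient of `g` with respect to the second variable. -/
noncomputable def gradY (g : Euc p × Euc d → ℝ) (x : Euc p) (y : Euc d) : Euc d :=
  gradient (fun y' => g (x, y')) y

/-- Hessian `∂²_{yy} g` as a continuous linear map. -/
noncomputable def hessYY (g : Euc p × Euc d → ℝ) (x : Euc p) (y : Euc d) :
    Euc d →L[ℝ] Euc d :=
  fderiv ℝ (fun y' => gradY g x y') y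

/-- Mixed Hessian `∂²_{xy} g` as a continuous linear map. -/
noncomputable def hessXY (g : Euc p × Euc d → ℝ) (x : Euc p) (y : Euc d) :
    Euc p →L[ℝ] Euc d :=
  fderiv ℝ (fun x' => gradY g x' y) x

/-- Augmented critical set. -/
def augCrit (g : Euc p × Euc d → ℝ) : Set (Euc p × Euc d) :=
  {z | gradY g z.1 z.2 = 0}

/-- `S` is a `C²` embedded submanifold of dimension `k` of `E`. -/
def IsC2Submanifold {E : Type*} [NormedAddCommGroup E] [NormedSpace ℝ E]
    (k : ℕ) (S : Set E) : Prop :=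
  ∀ z ∈ S, ∃ (W : Submodule ℝ E) (U V : Set E) (ψ ψinv : E → E),
    Module.finrank ℝ W = k ∧
    IsOpen U ∧ z ∈ U ∧ IsOpen V ∧
    ContDiffOn ℝ 2 ψ U ∧ ContDiffOn ℝ 2 ψinv V ∧
    (∀ u ∈ U, ψinv (ψ u) = u) ∧ (∀ v ∈ V, ψ (ψinv v) = v) ∧
    ψ '' U = V ∧ ψ '' (U ∩ S) = V ∩ (W : Set E)

/-- Parametric Morse–Bott function. -/
def IsParamMorseBott (g : Euc p × Euc d → ℝ) : Prop :=
  ∀ z : Euc p × Euc d, gradY g z.1 z.2 = 0 →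
    ∃ V : Set (Euc p × Euc d), IsOpen V ∧ z ∈ V ∧
      IsConnected (augCrit g ∩ V) ∧
      IsC2Submanifold (p + Module.finrank ℝ (LinearMap.ker (hessYY g z.1 z.2 : Euc d →ₗ[ℝ] Euc d)))
        (augCrit g ∩ V)

/-- `g` is `L`-smooth in `y` for some `L > 0`: the `y`-gradient is `L`-Lipschitz in `y`. -/
def SmoothInY (g : Euc p × Euc d → ℝ) : Prop :=
  ∃ L : NNReal, 0 < L ∧ ∀ x, LipschitzWith L (fun y => gradY g x y)

/-- `g` is coercive in `y`: `g (x, y) → +∞` as `‖y‖ → +∞`. -/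
def CoerciveInY (g : Euc p × Euc d → ℝ) : Prop :=
  ∀ x, Tendsto (fun y : Euc d => g (x, y)) (comap (fun y : Euc d => ‖y‖) atTop) atTop

/-- `φflow` is the gradient flow of `y ↦ g (x, y)` started at `y`. -/
def IsGradFlow (g : Euc p × Euc d → ℝ) (φflow : ℝ → Euc p → Euc d → Euc d) : Prop :=
  (∀ x y, φflow 0 x y = y) ∧
  ∀ x y, ∀ t ∈ Ici (0:ℝ),
    HasDerivWithinAt (fun s => φflow s x y) (-(gradY g x (φflow t x y))) (Ici 0) t

/-- `φsel` is the selection obtained as the limit of the gradient flow `φflow`. -/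
def IsFlowSelection (g : Euc p × Euc d → ℝ) (φflow : ℝ → Euc p → Euc d → Euc d)
    (φsel : Euc p → Euc d → Euc d) : Prop :=
  IsGradFlow g φflow ∧ ∀ x y, Tendsto (fun t => φflow t x y) atTop (𝓝 (φsel x y))

/-- Moore–Penrose pseudo-inverse, characterized by the four Penrose conditions. -/
def IsMPInv {E : Type*} [NormedAddCommGroup E] [InnerProductSpace ℝ E] [CompleteSpace E]
    (A B : E →L[ℝ] E) : Prop :=
  A ∘L B ∘L A = A ∧ B ∘L A ∘L B = B ∧
  ContinuousLinearMap.adjoint (A ∘L B) = A ∘L B ∧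
  ContinuousLinearMap.adjoint (B ∘L A) = B ∘L A



-- joint gradient map
noncomputable def Gmap (g : Euc p × Euc d → ℝ) : Euc p × Euc d → Euc d :=
  fun z => gradY g z.1 z.2

lemma fderiv_partial_eq {E : Type*} [NormedAddCommGroup E] [NormedSpace ℝ E]
    {f : Euc p × Euc d → E} (x : Euc p) (y : Euc d) (hf : DifferentiableAt ℝ f (x, y)) :
    fderiv ℝ (fun y' => f (x, y')) y =
      (fderiv ℝ f (x, y)).comp (ContinuousLinearMap.inr ℝ (Euc p) (Euc d)) :=
  (hf.hasFDerivAt.comp y (hasFDerivAt_prodMk_right x y)).fderiv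

lemma gradY_eq {g : Euc p × Euc d → ℝ} (hg : Differentiable ℝ g) (x : Euc p) (y : Euc d) :
    gradY g x y = (InnerProductSpace.toDual ℝ (Euc d)).symm
      ((fderiv ℝ g (x, y)).comp (ContinuousLinearMap.inr ℝ (Euc p) (Euc d))) := by
  rw [gradY, gradient, fderiv_partial_eq x y (hg _)]

lemma Gmap_contDiff {g : Euc p × Euc d → ℝ} (hg : ContDiff ℝ 3 g) :
    ContDiff ℝ 2 (Gmap g) := by
  have h1 : ContDiff ℝ 2 (fun z : Euc p × Euc d =>
      (fderiv ℝ g z).comp (ContinuousLinearMap.inr ℝ (Euc p) (Euc d))) :=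
    (hg.fderiv_right (by norm_num)).clm_comp contDiff_const
  have h2 := ((InnerProductSpace.toDual ℝ (Euc d)).symm.toContinuousLinearEquiv
      |>.toContinuousLinearMap.contDiff.comp h1)
  have he : Gmap g = fun z : Euc p × Euc d =>
      (InnerProductSpace.toDual ℝ (Euc d)).symm
        ((fderiv ℝ g z).comp (ContinuousLinearMap.inr ℝ (Euc p) (Euc d))) := by
    funext z
    have := gradY_eq (hg.differentiable (by norm_num)) z.1 z.2
    simpa [Gmap] using this
  rw [he]; exact h2

lemma hessYY_eq {g : Euc p × Euc d → ℝ} (hg : ContDiff ℝ 3 g) (x : Euc p) (y : Euc d) :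
    hessYY g x y = (fderiv ℝ (Gmap g) (x, y)).comp
      (ContinuousLinearMap.inr ℝ (Euc p) (Euc d)) := by
  rw [hessYY]
  exact fderiv_partial_eq x y ((Gmap_contDiff hg).differentiable (by norm_num) _)

lemma hessYY_continuous {g : Euc p × Euc d → ℝ} (hg : ContDiff ℝ 3 g) :
    Continuous (fun z : Euc p × Euc d => hessYY g z.1 z.2) := by
  have h1 : Continuous (fun z : Euc p × Euc d => fderiv ℝ (Gmap g) z) :=
    ((Gmap_contDiff hg).fderiv_right (m := 1) (by norm_num)).continuous
  have h2 : Continuous (fun z : Euc p × Euc d =>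
      (fderiv ℝ (Gmap g) z).comp (ContinuousLinearMap.inr ℝ (Euc p) (Euc d))) :=
    h1.clm_comp continuous_const
  refine h2.congr fun z => ?_
  rw [← hessYY_eq hg z.1 z.2]

lemma gradY_continuous {g : Euc p × Euc d → ℝ} (hg : ContDiff ℝ 3 g) :
    Continuous (Gmap g) := (Gmap_contDiff hg).continuous

lemma fderiv_partial_apply {g : Euc p × Euc d → ℝ} (hg : ContDiff ℝ 3 g)
    (x : Euc p) (u w : Euc d) :
    fderiv ℝ (fun y' => g (x, y')) u w = ⟪gradY g x u, w⟫ := by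
  have h : fderiv ℝ (fun y' => g (x, y')) u =
      InnerProductSpace.toDual ℝ (Euc d) (gradY g x u) := by
    rw [gradY, gradient, LinearIsometryEquiv.apply_symm_apply]
  rw [h, InnerProductSpace.toDual_apply_apply]

/-- The limit of a gradient trajectory is a critical point. -/
lemma limit_critical {g : Euc p × Euc d → ℝ} (hg : ContDiff ℝ 3 g)
    (x : Euc p) (φ : ℝ → Euc d)
    (hder : ∀ t ∈ Ici (0:ℝ), HasDerivWithinAt φ (-(gradY g x (φ t))) (Ici 0) t)
    (l : Euc d) (hlim : Tendsto φ atTop (𝓝 l)) :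
    gradY g x l = 0 := by
  by_contra hv
  set v := gradY g x l with hvdef
  have hvnorm : (0:ℝ) < ‖v‖ := norm_pos_iff.2 hv
  have cg : Continuous (fun u : Euc d => gradY g x u) :=
    (gradY_continuous hg).comp (Continuous.prodMk_right x)
  have htend2 : Tendsto (fun t => gradY g x (φ t)) atTop (𝓝 v) :=
    (cg.tendsto l).comp hlim
  have hev : ∀ᶠ t in atTop, ‖gradY g x (φ t) - v‖ ≤ ‖v‖ / 2 := by
    have : ∀ᶠ u in 𝓝 v, ‖u - v‖ ≤ ‖v‖ / 2 := by
      have : Metric.closedBall v (‖v‖/2) ∈ 𝓝 v :=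
        Metric.closedBall_mem_nhds v (by positivity)
      filter_upwards [this] with u hu
      simpa [Metric.mem_closedBall, dist_eq_norm] using hu
    exact htend2.eventually this
  obtain ⟨T0, hT0⟩ := hev.exists_forall_of_atTop
  set T := max T0 0 with hTdef
  set ψ : ℝ → ℝ := fun t => ⟪v, φ t⟫ + t * (‖v‖^2 / 2) with hψdef
  have hψder : ∀ t ∈ Ici (0:ℝ), HasDerivWithinAt ψ
      (⟪v, -(gradY g x (φ t))⟫ + ‖v‖^2/2) (Ici 0) t := by
    intro t ht
    have h1 : HasDerivWithinAt (fun s => ⟪v, φ s⟫) (⟪v, -(gradY g x (φ t))⟫) (Ici 0) t :=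
      (innerSL ℝ v).hasFDerivAt.comp_hasDerivWithinAt t (hder t ht)
    have h2 : HasDerivWithinAt (fun s : ℝ => s * (‖v‖^2/2)) (‖v‖^2/2) (Ici 0) t := by
      simpa using (hasDerivWithinAt_id t (Ici 0)).mul_const (‖v‖^2/2)
    exact h1.add h2
  have hanti : AntitoneOn ψ (Ici T) := by
    apply antitoneOn_of_deriv_nonpos (convex_Ici T)
    · intro t ht
      have ht0 : t ∈ Ici (0:ℝ) := mem_Ici.2 (le_trans (le_max_right _ _) (mem_Ici.1 ht))
      exact ((hψder t ht0).continuousWithinAt).mono (Ici_subset_Ici.2 (le_max_right _ _))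
    · intro t ht
      rw [interior_Ici] at ht
      have ht0 : (0:ℝ) < t := lt_of_le_of_lt (le_max_right _ _) ht
      exact ((hψder t (le_of_lt ht0)).hasDerivAt (Ici_mem_nhds ht0)).differentiableAt
        |>.differentiableWithinAt
    · intro t ht
      rw [interior_Ici] at ht
      have ht0 : (0:ℝ) < t := lt_of_le_of_lt (le_max_right _ _) ht
      have hda := (hψder t (le_of_lt ht0)).hasDerivAt (Ici_mem_nhds ht0)
      rw [hda.deriv]
      have hclose : ‖gradY g x (φ t) - v‖ ≤ ‖v‖ / 2 :=
        hT0 t (le_trans (le_max_left _ _) (le_of_lt ht))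
      have : ⟪v, gradY g x (φ t)⟫ ≥ ‖v‖^2 / 2 := by
        have h1 : ⟪v, gradY g x (φ t)⟫ = ⟪v, v⟫ + ⟪v, gradY g x (φ t) - v⟫ := by
          rw [← inner_add_right]
          congr 1
          abel
        have h2 : |⟪v, gradY g x (φ t) - v⟫| ≤ ‖v‖ * (‖v‖/2) := by
          calc |⟪v, gradY g x (φ t) - v⟫| ≤ ‖v‖ * ‖gradY g x (φ t) - v‖ :=
                abs_real_inner_le_norm _ _
            _ ≤ ‖v‖ * (‖v‖/2) := by
                exact mul_le_mul_of_nonneg_left hclose (norm_nonneg _)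
        rw [h1, real_inner_self_eq_norm_sq]
        nlinarith [abs_le.1 h2]
      rw [inner_neg_right]
      nlinarith
  -- contradiction from unboundedness
  have hlow : Tendsto (fun t => ⟪v, φ t⟫) atTop (𝓝 (⟪v, l⟫)) :=
    ((innerSL ℝ v).continuous.tendsto l).comp hlim
  have hev2 : ∀ᶠ t in atTop, ⟪v, l⟫ - 1 < ⟪v, φ t⟫ :=
    hlow.eventually (eventually_gt_nhds (by linarith))
  have hev3 : ∀ᶠ t in atTop, ψ T - t * (‖v‖^2/2) < ⟪v, l⟫ - 1 := by
    have : Tendsto (fun t : ℝ => ψ T - t * (‖v‖^2/2)) atTop atBot := by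
      apply tendsto_atBot_add_const_left
      have : Tendsto (fun t : ℝ => t * (‖v‖^2/2)) atTop atTop :=
        Tendsto.atTop_mul_const (by positivity) tendsto_id
      exact (tendsto_neg_atBot_iff.2 this).congr (fun t => by ring)
    exact this.eventually (eventually_lt_atBot _)
  obtain ⟨t, htT, h2, h3⟩ := ((eventually_ge_atTop T).and (hev2.and hev3)).exists
  have hψle : ψ t ≤ ψ T := hanti (le_refl T : T ∈ Ici T) htT htT
  simp only [hψdef] at hψle h3
  linarith

lemma g_decreasing {g : Euc p × Euc d → ℝ} (hg : ContDiff ℝ 3 g) (x : Euc p) (φ : ℝ → Euc d)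
    (hder : ∀ t ∈ Ici (0:ℝ), HasDerivWithinAt φ (-(gradY g x (φ t))) (Ici 0) t) :
    AntitoneOn (fun t => g (x, φ t)) (Ici 0) := by
  have hgx : Differentiable ℝ (fun u : Euc d => g (x, u)) := by
    have := (hg.differentiable (by norm_num))
    exact fun u => (this (x, u)).comp u ((differentiableAt_const x).prodMk differentiableAt_id)
  have hd2 : ∀ t ∈ Ici (0:ℝ), HasDerivWithinAt (fun s => g (x, φ s))
      (-(‖gradY g x (φ t)‖^2)) (Ici 0) t := by
    intro t ht
    have h1 := (hgx (φ t)).hasFDerivAt.comp_hasDerivWithinAt t (hder t ht)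
    refine h1.congr_deriv ?_
    rw [fderiv_partial_apply hg x (φ t) _, inner_neg_right, real_inner_self_eq_norm_sq]
  apply antitoneOn_of_deriv_nonpos (convex_Ici 0)
  · exact fun t ht => (hd2 t ht).continuousWithinAt
  · intro t ht
    rw [interior_Ici] at ht
    exact ((hd2 t (mem_Ici.2 (le_of_lt (mem_Ioi.1 ht)))).hasDerivAt (Ici_mem_nhds ht)).differentiableAt
      |>.differentiableWithinAt
  · intro t ht
    rw [interior_Ici] at ht
    rw [((hd2 t (mem_Ici.2 (le_of_lt (mem_Ioi.1 ht)))).hasDerivAt (Ici_mem_nhds ht)).deriv]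
    exact neg_nonpos.mpr (sq_nonneg _)

lemma traj_in_ball {g : Euc p × Euc d → ℝ} (hg : ContDiff ℝ 3 g) (x₀ : Euc p)
    (hcoer : Tendsto (fun y' : Euc d => g (x₀, y'))
      (comap (fun y' : Euc d => ‖y'‖) atTop) atTop) (y : Euc d) :
    ∃ r > 0, ∃ R : ℝ, ‖y‖ < R ∧
      ∀ x ∈ ball x₀ r, ∀ φ : ℝ → Euc d, φ 0 = y →
        (∀ t ∈ Ici (0:ℝ), HasDerivWithinAt φ (-(gradY g x (φ t))) (Ici 0) t) →
        ∀ t ∈ Ici (0:ℝ), ‖φ t‖ < R := by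
  have hev : ∀ᶠ b in atTop, ∀ v : Euc d, ‖v‖ = b → g (x₀, y) + 2 ≤ g (x₀, v) := by
    have := hcoer.eventually (eventually_ge_atTop (g (x₀, y) + 2))
    exact eventually_comap.1 this
  obtain ⟨M0, hM0⟩ := hev.exists_forall_of_atTop
  set R := max M0 (‖y‖ + 1) with hRdef
  have hyR : ‖y‖ < R := lt_of_lt_of_le (by linarith) (le_max_right _ _)
  have hsphere : ∀ v : Euc d, ‖v‖ = R → g (x₀, y) + 2 ≤ g (x₀, v) :=
    fun v hv => hM0 R (le_max_left _ _) v hv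
  set O : Set (Euc p × Euc d) := {z | g (z.1, y) + 1 < g z} with hOdef
  have hOopen : IsOpen O := by
    apply isOpen_lt _ hg.continuous
    exact (hg.continuous.comp (continuous_fst.prodMk continuous_const)).add continuous_const
  have hsub : {x₀} ×ˢ sphere (0 : Euc d) R ⊆ O := by
    rintro ⟨a, b⟩ ⟨ha, hb⟩
    simp only [mem_singleton_iff] at ha
    rw [mem_sphere_iff_norm, sub_zero] at hb
    subst ha
    have := hsphere b hb
    simp only [hOdef, mem_setOf_eq]
    linarith
  obtain ⟨V, W, hVopen, hWopen, hV, hW, hVW⟩ :=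
    generalized_tube_lemma isCompact_singleton (isCompact_sphere (0 : Euc d) R) hOopen hsub
  have hx₀V : x₀ ∈ V := hV rfl
  obtain ⟨r, hr, hball⟩ := Metric.isOpen_iff.1 hVopen x₀ hx₀V
  refine ⟨r, hr, R, hyR, ?_⟩
  intro x hx φ hφ0 hder t ht
  by_contra hcon
  push_neg at hcon
  have hcont : ContinuousOn (fun s => ‖φ s‖) (Icc 0 t) := by
    apply ContinuousOn.norm
    intro s hs
    exact ((hder s hs.1).continuousWithinAt).mono (fun u hu => hu.1)
  have hR1 : R ∈ Icc (‖φ 0‖) (‖φ t‖) := by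
    constructor
    · rw [hφ0]; exact le_of_lt hyR
    · exact hcon
  obtain ⟨t1, ht1mem, ht1⟩ := intermediate_value_Icc ht hcont hR1
  have hmemO : (x, φ t1) ∈ O := by
    apply hVW
    constructor
    · exact hball hx
    · exact hW (by rw [mem_sphere_iff_norm, sub_zero]; exact ht1)
  have hanti := g_decreasing hg x φ hder
  have hle : g (x, φ t1) ≤ g (x, φ 0) :=
    hanti (le_refl (0:ℝ) : (0:ℝ) ∈ Ici (0:ℝ)) ht1mem.1 ht1mem.1
  rw [hφ0] at hle
  simp only [hOdef, mem_setOf_eq] at hmemO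
  linarith

lemma mp_norm_le {E : Type*} [NormedAddCommGroup E] [InnerProductSpace ℝ E]
    [CompleteSpace E] {A B : E →L[ℝ] E} (h : IsMPInv A B) {δ : ℝ} (hδ : 0 < δ)
    (hA : ∀ v ∈ (LinearMap.ker (A : E →ₗ[ℝ] E))ᗮ, δ * ‖v‖ ≤ ‖A v‖) : ‖B‖ ≤ 1/δ := by
  obtain ⟨hABA, hBAB, hP, hQ⟩ := h
  apply ContinuousLinearMap.opNorm_le_bound _ (by positivity)
  intro w
  set u := B w with hu
  have hQu : B (A u) = u := by
    have := ContinuousLinearMap.ext_iff.1 hBAB w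
    simpa [ContinuousLinearMap.comp_apply] using this
  have humem : u ∈ (LinearMap.ker (A : E →ₗ[ℝ] E))ᗮ := by
    rw [Submodule.mem_orthogonal]
    intro k hk
    have hk0 : A k = 0 := hk
    have e1 : ⟪k, u⟫ = ⟪k, (B ∘L A) u⟫ := by
      simp [ContinuousLinearMap.comp_apply, hQu]
    have e2 : ⟪k, (B ∘L A) u⟫ = ⟪(B ∘L A) k, u⟫ := by
      conv_lhs => rw [← hQ]
      rw [ContinuousLinearMap.adjoint_inner_right]
    rw [e1, e2]
    simp [ContinuousLinearMap.comp_apply, hk0]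
  have hAu : δ * ‖u‖ ≤ ‖A u‖ := hA u humem
  have hPle : ‖A u‖ ≤ ‖w‖ := by
    have hPP : A (B (A (B w))) = A (B w) := by
      have := ContinuousLinearMap.ext_iff.1 hABA (B w)
      simpa [ContinuousLinearMap.comp_apply] using this
    have hsq : ‖A (B w)‖^2 = ⟪w, (A ∘L B) ((A ∘L B) w)⟫ := by
      rw [← real_inner_self_eq_norm_sq]
      have e3 : ⟪w, (A ∘L B) ((A ∘L B) w)⟫ = ⟪(A ∘L B) w, (A ∘L B) w⟫ := by
        rw [← ContinuousLinearMap.adjoint_inner_left, hP]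
      simpa [ContinuousLinearMap.comp_apply] using e3.symm
    have hsq2 : ‖A (B w)‖^2 = ⟪w, A (B w)⟫ := by
      rw [hsq]; simp [ContinuousLinearMap.comp_apply, hPP]
    have hle : ⟪w, A (B w)⟫ ≤ ‖w‖ * ‖A (B w)‖ := real_inner_le_norm _ _
    rcases eq_or_lt_of_le (norm_nonneg (A (B w))) with h0 | h0
    · rw [hu, ← h0]; exact norm_nonneg w
    · have : ‖A (B w)‖^2 ≤ ‖w‖ * ‖A (B w)‖ := by rw [hsq2]; exact hle
      have h4 : ‖A (B w)‖ ≤ ‖w‖ := le_of_mul_le_mul_right (by nlinarith [this]) h0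
      exact h4
  calc ‖B w‖ = ‖u‖ := rfl
    _ ≤ ‖A u‖ / δ := by rw [le_div_iff₀ hδ]; linarith [hAu]
    _ ≤ ‖w‖ / δ := by gcongr
    _ = 1/δ * ‖w‖ := by ring

lemma kernel_dim_ge {g : Euc p × Euc d → ℝ} (hg : ContDiff ℝ 3 g)
    {S : Set (Euc p × Euc d)} (hS : S ⊆ augCrit g)
    {W : Submodule ℝ (Euc p × Euc d)} {U V : Set (Euc p × Euc d)}
    {ψ ψinv : Euc p × Euc d → Euc p × Euc d}
    (hUopen : IsOpen U) (hVopen : IsOpen V)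
    (hψ : ContDiffOn ℝ 2 ψ U) (hψinv : ContDiffOn ℝ 2 ψinv V)
    (hli : ∀ u ∈ U, ψinv (ψ u) = u) (himgS : ψ '' (U ∩ S) = V ∩ (W : Set (Euc p × Euc d)))
    {z' : Euc p × Euc d} (hz' : z' ∈ U ∩ S) :
    Module.finrank ℝ W ≤ p + Module.finrank ℝ (LinearMap.ker (hessYY g z'.1 z'.2 : Euc d →ₗ[ℝ] Euc d)) := by
  classical
  obtain ⟨hz'U, hz'S⟩ := hz'
  have hψz' : ψ z' ∈ V ∩ (W : Set (Euc p × Euc d)) := by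
    rw [← himgS]; exact mem_image_of_mem ψ ⟨hz'U, hz'S⟩
  have hψdiff : DifferentiableAt ℝ ψ z' :=
    ((hψ.differentiableOn (by norm_num)).differentiableAt (hUopen.mem_nhds hz'U))
  have hψinvdiff : DifferentiableAt ℝ ψinv (ψ z') :=
    ((hψinv.differentiableOn (by norm_num)).differentiableAt (hVopen.mem_nhds hψz'.1))
  set T := fderiv ℝ ψinv (ψ z') with hT
  set Sd := fderiv ℝ ψ z' with hSd
  have hTS : T.comp Sd = ContinuousLinearMap.id ℝ (Euc p × Euc d) := by
    have hev : ψinv ∘ ψ =ᶠ[𝓝 z'] id :=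
      eventually_of_mem (hUopen.mem_nhds hz'U) (fun u hu => hli u hu)
    have h1 : fderiv ℝ (ψinv ∘ ψ) z' = T.comp Sd :=
      (hψinvdiff.hasFDerivAt.comp z' hψdiff.hasFDerivAt).fderiv
    have h2 : fderiv ℝ (ψinv ∘ ψ) z' = ContinuousLinearMap.id ℝ (Euc p × Euc d) := by
      rw [hev.fderiv_eq, fderiv_id]
    rw [← h1, h2]
  set L' := fderiv ℝ (Gmap g) z' with hL'
  set ι := W.subtypeL with hι
  -- the composed chart map is locally constant equal to 0
  have hF0 : ∀ᶠ w : W in 𝓝 0, Gmap g (ψinv (ψ z' + (w : Euc p × Euc d))) = 0 := by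
    have hcont : Continuous (fun w : W => ψ z' + (w : Euc p × Euc d)) :=
      continuous_const.add continuous_subtype_val
    have hO : IsOpen ((fun w : W => ψ z' + (w : Euc p × Euc d)) ⁻¹' V) :=
      hVopen.preimage hcont
    have h0O : (0 : W) ∈ (fun w : W => ψ z' + (w : Euc p × Euc d)) ⁻¹' V := by
      simp only [mem_preimage, Submodule.coe_zero, add_zero]
      exact hψz'.1
    filter_upwards [hO.mem_nhds h0O] with w hw
    have hmem : ψ z' + (w : Euc p × Euc d) ∈ V ∩ (W : Set (Euc p × Euc d)) :=
      ⟨hw, W.add_mem hψz'.2 w.2⟩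
    rw [← himgS] at hmem
    obtain ⟨u, huUS, hu⟩ := hmem
    rw [← hu, hli u huUS.1]
    exact hS huUS.2
  -- chain rule
  set fc : W → Euc p × Euc d := fun w : W => ψ z' + (w : Euc p × Euc d) with hfc
  have ha : HasFDerivAt fc ι 0 := (W.subtypeL.hasFDerivAt).const_add (ψ z')
  have hb : HasFDerivAt ψinv T (fc 0) := by
    have h0 : fc 0 = ψ z' := by simp [hfc]
    rw [h0]
    exact hψinvdiff.hasFDerivAt
  have hab : HasFDerivAt (ψinv ∘ fc) (T.comp ι) 0 := hb.comp 0 ha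
  have hGdiff : HasFDerivAt (Gmap g) L' ((ψinv ∘ fc) 0) := by
    have h0 : (ψinv ∘ fc) 0 = z' := by
      show ψinv (ψ z' + ((0:W) : Euc p × Euc d)) = z'
      simpa using hli z' hz'U
    rw [h0]
    exact ((Gmap_contDiff hg).differentiable (by norm_num) z').hasFDerivAt
  have hcomp : HasFDerivAt (Gmap g ∘ (ψinv ∘ fc)) (L'.comp (T.comp ι)) 0 :=
    hGdiff.comp 0 hab
  have hzero : L'.comp (T.comp ι) = 0 := by
    have h1 : fderiv ℝ (fun w : W => Gmap g (ψinv (ψ z' + (w : Euc p × Euc d)))) 0 =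
        L'.comp (T.comp ι) := hcomp.fderiv
    have hFeq : (fun w : W => Gmap g (ψinv (ψ z' + (w : Euc p × Euc d))))
        =ᶠ[𝓝 (0 : W)] (fun _ => (0 : Euc d)) := hF0
    have h2 : fderiv ℝ (fun w : W => Gmap g (ψinv (ψ z' + (w : Euc p × Euc d)))) 0 =
        fderiv ℝ (fun _ : W => (0 : Euc d)) 0 := hFeq.fderiv_eq
    rw [← h1, h2, fderiv_fun_const]
    rfl
  -- injectivity of T ∘ ι
  have hTsurj : Function.Surjective T := by
    intro e
    exact ⟨Sd e, by
      have := ContinuousLinearMap.ext_iff.1 hTS e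
      simpa [ContinuousLinearMap.comp_apply] using this⟩
  have hTinj : Function.Injective T :=
    LinearMap.injective_iff_surjective.2 hTsurj
  have hinj2 : Function.Injective ((T.comp ι : W →L[ℝ] Euc p × Euc d)) := by
    intro a b hab
    exact Subtype.ext (hTinj hab)
  -- rank counting
  set L'L := (L' : (Euc p × Euc d) →ₗ[ℝ] Euc d)
  have hrange_le : LinearMap.range ((T.comp ι : W →L[ℝ] Euc p × Euc d) :
      W →ₗ[ℝ] Euc p × Euc d) ≤ LinearMap.ker L'L := by
    rintro _ ⟨w, rfl⟩
    have := ContinuousLinearMap.ext_iff.1 hzero w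
    exact (by simpa [ContinuousLinearMap.comp_apply] using this : L' (T (ι w)) = 0)
  have hfr1 : Module.finrank ℝ W ≤ Module.finrank ℝ (LinearMap.ker L'L) := by
    have := LinearMap.finrank_range_of_inj (f := ((T.comp ι : W →L[ℝ] Euc p × Euc d) :
      W →ₗ[ℝ] Euc p × Euc d)) hinj2
    rw [← this]
    exact Submodule.finrank_mono hrange_le
  -- the kernel of L' projects to Euc p with fiber inside ker hessYY
  set π : LinearMap.ker L'L →ₗ[ℝ] Euc p :=
    (LinearMap.fst ℝ (Euc p) (Euc d)).comp (LinearMap.ker L'L).subtype with hπ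
  have hfr2 : Module.finrank ℝ (LinearMap.ker L'L) =
      Module.finrank ℝ (LinearMap.range π) + Module.finrank ℝ (LinearMap.ker π) :=
    (LinearMap.finrank_range_add_finrank_ker π).symm
  have hfr3 : Module.finrank ℝ (LinearMap.range π) ≤ p := by
    have := Submodule.finrank_le (LinearMap.range π)
    simpa [finrank_euclideanSpace_fin] using this
  -- map from ker π into ker hessYY
  have hAeq : hessYY g z'.1 z'.2 = L'.comp (ContinuousLinearMap.inr ℝ (Euc p) (Euc d)) := by
    have := hessYY_eq hg z'.1 z'.2
    simpa [hL'] using this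
  set μ : LinearMap.ker π →ₗ[ℝ] Euc d :=
    (LinearMap.snd ℝ (Euc p) (Euc d)).comp
      ((LinearMap.ker L'L).subtype.comp (LinearMap.ker π).subtype) with hμ
  have hμmem : ∀ a : LinearMap.ker π, μ a ∈ LinearMap.ker (hessYY g z'.1 z'.2 : Euc d →ₗ[ℝ] Euc d) := by
    rintro ⟨⟨⟨a1, a2⟩, hmem⟩, hker⟩
    have ha1 : a1 = 0 := hker
    have hL0 : L'L (a1, a2) = 0 := hmem
    rw [LinearMap.mem_ker]
    show hessYY g z'.1 z'.2 a2 = 0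
    rw [hAeq]
    show L' ((0 : Euc p), a2) = 0
    rw [← ha1]
    exact hL0
  set μ' : LinearMap.ker π →ₗ[ℝ] LinearMap.ker (hessYY g z'.1 z'.2 : Euc d →ₗ[ℝ] Euc d) :=
    μ.codRestrict _ hμmem with hμ'
  have hμ'inj : Function.Injective μ' := by
    rintro ⟨⟨⟨a1, a2⟩, hmem⟩, hker⟩ ⟨⟨⟨b1, b2⟩, hmem'⟩, hker'⟩ hab
    have ha1 : a1 = 0 := hker
    have hb1 : b1 = 0 := hker'
    have h2 : a2 = b2 := congrArg Subtype.val hab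
    apply Subtype.ext
    apply Subtype.ext
    rw [Prod.mk.injEq]
    exact ⟨ha1.trans hb1.symm, h2⟩
  have hfr4 : Module.finrank ℝ (LinearMap.ker π) ≤
      Module.finrank ℝ (LinearMap.ker (hessYY g z'.1 z'.2 : Euc d →ₗ[ℝ] Euc d)) :=
    LinearMap.finrank_le_finrank_of_injective hμ'inj
  omega


set_option maxHeartbeats 1000000 in
set_option synthInstance.maxHeartbeats 200000 in
lemma no_blowup {g : Euc p × Euc d → ℝ} (hg : ContDiff ℝ 3 g) (hmb : IsParamMorseBott g)
    {zs : Euc p × Euc d} (hzs : zs ∈ augCrit g)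
    {zseq : ℕ → Euc p × Euc d} (hcrit : ∀ n, zseq n ∈ augCrit g)
    (hlim : Tendsto zseq atTop (𝓝 zs))
    {Bseq : ℕ → (Euc d →L[ℝ] Euc d)}
    (hB : ∀ n : ℕ, IsMPInv (hessYY g (zseq n).1 (zseq n).2) (Bseq n))
    (hBnorm : ∀ n : ℕ, (n : ℝ) < ‖Bseq n‖) : False := by
  classical
  obtain ⟨V, hVopen, hzsV, -, hsubm⟩ := hmb zs hzs
  obtain ⟨W, U, Vc, ψ, ψinv, hW, hUopen, hzsU, hVcopen, hψ, hψinv, hli, -, -, himgS⟩ :=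
    hsubm zs ⟨hzs, hzsV⟩
  set A : Euc p × Euc d → (Euc d →L[ℝ] Euc d) := fun z => hessYY g z.1 z.2 with hAdef
  set Astar := A zs with hAstar
  set K := LinearMap.ker (Astar : Euc d →ₗ[ℝ] Euc d) with hK
  set N := Kᗮ with hN
  set kst := Module.finrank ℝ K with hkst
  -- antilipschitz constant for Astar on N
  have hinjker : LinearMap.ker ((Astar.toLinearMap).comp N.subtype) = ⊥ := by
    rw [LinearMap.ker_eq_bot]
    intro a b hab
    have hmem : ((a : Euc d) - (b : Euc d)) ∈ K := by
      rw [hK, LinearMap.mem_ker]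
      have : Astar (a : Euc d) = Astar (b : Euc d) := hab
      show Astar ((a : Euc d) - (b : Euc d)) = 0
      rw [map_sub, this, sub_self]
    have hmem2 : ((a : Euc d) - (b : Euc d)) ∈ N := N.sub_mem a.2 b.2
    have h0 : ((a : Euc d) - (b : Euc d)) = 0 := by
      have := (Submodule.mem_orthogonal K _).1 hmem2 _ hmem
      rwa [inner_self_eq_zero] at this
    exact Subtype.ext (sub_eq_zero.1 h0)
  obtain ⟨Kc, hKcpos, hKc⟩ :=
    LinearMap.exists_antilipschitzWith ((Astar.toLinearMap).comp N.subtype) hinjker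
  set KcR : ℝ := (Kc : ℝ) with hKcR
  have hKcRpos : (0:ℝ) < KcR := hKcpos
  have hcb : ∀ u ∈ N, ‖u‖ ≤ KcR * ‖Astar u‖ := by
    intro u hu
    have h1 := hKc.le_mul_dist (⟨u, hu⟩ : N) 0
    simpa [dist_eq_norm, map_zero] using h1
  -- eventual properties
  have hAcont : Tendsto (fun n => A (zseq n)) atTop (𝓝 Astar) :=
    ((hessYY_continuous hg).tendsto zs).comp hlim
  have e3 : ∀ᶠ n in atTop, ‖A (zseq n) - Astar‖ < (2 * KcR)⁻¹ := by
    have hpos : (0:ℝ) < (2 * KcR)⁻¹ := by positivity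
    have := hAcont (Metric.ball_mem_nhds Astar hpos)
    filter_upwards [this] with n hn
    simpa [dist_eq_norm] using hn
  have e1 : ∀ᶠ n in atTop, zseq n ∈ U := hlim (hUopen.mem_nhds hzsU)
  have e2 : ∀ᶠ n in atTop, zseq n ∈ V := hlim (hVopen.mem_nhds hzsV)
  have e4 : ∀ᶠ n : ℕ in atTop, (2 * KcR : ℝ) < (n : ℝ) :=
    tendsto_natCast_atTop_atTop.eventually (eventually_gt_atTop _)
  obtain ⟨n, hn1, hn2, hn3, hn4⟩ := (e1.and (e2.and (e3.and e4))).exists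
  set z' := zseq n with hz'
  have hnpos : (0:ℝ) < (n:ℝ) := lt_trans (by positivity) hn4
  -- kernel dimension bound
  have hz'US : z' ∈ U ∩ (augCrit g ∩ V) := ⟨hn1, hcrit n, hn2⟩
  have hkdim : kst ≤ Module.finrank ℝ (LinearMap.ker (A z' : Euc d →ₗ[ℝ] Euc d)) := by
    have h := kernel_dim_ge hg (inter_subset_left : augCrit g ∩ V ⊆ augCrit g)
      hUopen hVcopen hψ hψinv hli himgS hz'US
    rw [hW] at h
    have h' : p + kst ≤ p + Module.finrank ℝ (LinearMap.ker (A z' : Euc d →ₗ[ℝ] Euc d)) := h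
    omega
  -- bad vector from large pseudoinverse norm
  have hbad : ∃ v ∈ (LinearMap.ker (A z' : Euc d →ₗ[ℝ] Euc d))ᗮ, ‖A z' v‖ < (n:ℝ)⁻¹ * ‖v‖ := by
    by_contra hcon
    push_neg at hcon
    have hle : ‖Bseq n‖ ≤ 1/((n:ℝ)⁻¹) := mp_norm_le (hB n) (by positivity) hcon
    rw [one_div, inv_inv] at hle
    exact absurd hle (not_le.2 (hBnorm n))
  obtain ⟨v, hvmem, hvbad⟩ := hbad
  have hvne : v ≠ 0 := by
    intro h0
    rw [h0] at hvbad
    simp at hvbad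
  set Kn := LinearMap.ker (A z' : Euc d →ₗ[ℝ] Euc d) with hKn
  have hvnot : v ∉ Kn := by
    intro hvK
    have := (Submodule.mem_orthogonal Kn v).1 hvmem v hvK
    rw [inner_self_eq_zero] at this
    exact hvne this
  have hinf_bot : Kn ⊓ (ℝ ∙ v) = ⊥ := by
    rw [Submodule.eq_bot_iff]
    rintro u ⟨huK, huS⟩
    obtain ⟨t, rfl⟩ := Submodule.mem_span_singleton.1 huS
    rcases eq_or_ne t 0 with ht | ht
    · rw [ht, zero_smul]
    · exact absurd (by simpa [smul_smul, inv_mul_cancel₀ ht] using Kn.smul_mem t⁻¹ huK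
        : v ∈ Kn) hvnot
  have hSnrank : Module.finrank ℝ Kn + 1 ≤ Module.finrank ℝ (Kn ⊔ (ℝ ∙ v) : Submodule ℝ (Euc d)) := by
    have h := Submodule.finrank_sup_add_finrank_inf_eq Kn (ℝ ∙ v)
    rw [hinf_bot, finrank_span_singleton hvne] at h
    simp only [finrank_bot, add_zero] at h
    omega
  have hNrank : Module.finrank ℝ N + kst = d := by
    have h1 := Submodule.finrank_add_finrank_orthogonal (K := K)
    rw [finrank_euclideanSpace_fin] at h1
    rw [hN, ← hkst] at *
    omega
  have hSnN : ∃ u : Euc d, u ≠ 0 ∧ u ∈ (Kn ⊔ (ℝ ∙ v)) ⊓ N := by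
    have h2 := Submodule.finrank_sup_add_finrank_inf_eq (Kn ⊔ (ℝ ∙ v)) N
    have h3 : Module.finrank ℝ ((Kn ⊔ (ℝ ∙ v)) ⊔ N : Submodule ℝ (Euc d)) ≤ d := by
      have := Submodule.finrank_le ((Kn ⊔ (ℝ ∙ v)) ⊔ N : Submodule ℝ (Euc d))
      rwa [finrank_euclideanSpace_fin] at this
    have h4 : 1 ≤ Module.finrank ℝ ((Kn ⊔ (ℝ ∙ v)) ⊓ N : Submodule ℝ (Euc d)) := by omega
    have h5 : ((Kn ⊔ (ℝ ∙ v)) ⊓ N : Submodule ℝ (Euc d)) ≠ ⊥ := by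
      intro hbot
      rw [hbot, finrank_bot] at h4
      omega
    obtain ⟨u, humem, hune⟩ := Submodule.ne_bot_iff _ |>.1 h5
    exact ⟨u, hune, humem⟩
  obtain ⟨u, hune, humem⟩ := hSnN
  have huS : u ∈ Kn ⊔ (ℝ ∙ v) := humem.1
  have huN : u ∈ N := humem.2
  obtain ⟨k, hk, w, hw, hkw⟩ := Submodule.mem_sup.1 huS
  obtain ⟨t, rfl⟩ := Submodule.mem_span_singleton.1 hw
  -- ‖A z' u‖ ≤ δ ‖u‖
  have horth : ⟪k, t • v⟫ = 0 := by
    rw [inner_smul_right, (Submodule.mem_orthogonal Kn v).1 hvmem k hk, mul_zero]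
  have hpyth : ‖t • v‖ ≤ ‖u‖ := by
    have h5 : ‖u‖^2 = ‖k‖^2 + ‖t • v‖^2 := by
      rw [← hkw, norm_add_sq_real, horth]
      ring
    nlinarith [norm_nonneg u, norm_nonneg k, norm_nonneg (t • v)]
  have hAu : ‖A z' u‖ ≤ (n:ℝ)⁻¹ * ‖u‖ := by
    have hAk : A z' k = 0 := hk
    have h6 : A z' u = t • (A z' v) := by
      rw [← hkw, map_add, hAk, zero_add, map_smul]
    rw [h6, norm_smul]
    calc |t| * ‖A z' v‖ ≤ |t| * ((n:ℝ)⁻¹ * ‖v‖) :=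
          mul_le_mul_of_nonneg_left (le_of_lt hvbad) (abs_nonneg t)
      _ = (n:ℝ)⁻¹ * ‖t • v‖ := by rw [norm_smul, Real.norm_eq_abs]; ring
      _ ≤ (n:ℝ)⁻¹ * ‖u‖ := mul_le_mul_of_nonneg_left hpyth (by positivity)
  -- contradiction
  have hup : (0:ℝ) < ‖u‖ := norm_pos_iff.2 hune
  have h8 : ‖Astar u‖ ≤ ‖A z' u‖ + ‖A z' - Astar‖ * ‖u‖ := by
    have h9 : ‖Astar u - A z' u‖ ≤ ‖A z' - Astar‖ * ‖u‖ := by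
      rw [← norm_neg, neg_sub, ← ContinuousLinearMap.sub_apply]
      exact (A z' - Astar).le_opNorm u
    have h9b : ‖Astar u‖ - ‖A z' u‖ ≤ ‖Astar u - A z' u‖ := norm_sub_norm_le _ _
    linarith
  have hstep : ‖Astar u‖ ≤ (n:ℝ)⁻¹ * ‖u‖ + (2*KcR)⁻¹ * ‖u‖ := by
    have h10 := mul_le_mul_of_nonneg_right (le_of_lt hn3) (norm_nonneg u)
    linarith
  have hfinal : ‖u‖ ≤ KcR * ((n:ℝ)⁻¹ * ‖u‖ + (2*KcR)⁻¹ * ‖u‖) :=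
    le_trans (hcb u huN) (mul_le_mul_of_nonneg_left hstep (le_of_lt hKcRpos))
  have h11 : ((n:ℝ))⁻¹ < ((2*KcR:ℝ))⁻¹ := by
    apply inv_strictAnti₀ (by positivity) hn4
  have h12 : KcR * (((2*KcR:ℝ))⁻¹ + ((2*KcR:ℝ))⁻¹) = 1 := by
    field_simp
    ring
  have h13 : KcR * ((n:ℝ)⁻¹ * ‖u‖ + (2*KcR)⁻¹ * ‖u‖) <
      KcR * ((2*KcR)⁻¹ * ‖u‖ + (2*KcR)⁻¹ * ‖u‖) := by
    apply mul_lt_mul_of_pos_left _ hKcRpos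
    have := mul_lt_mul_of_pos_right h11 hup
    linarith
  have h14 : KcR * ((2*KcR)⁻¹ * ‖u‖ + (2*KcR)⁻¹ * ‖u‖) = ‖u‖ := by
    calc KcR * ((2*KcR)⁻¹ * ‖u‖ + (2*KcR)⁻¹ * ‖u‖)
        = KcR * ((2*KcR)⁻¹ + (2*KcR)⁻¹) * ‖u‖ := by ring
      _ = 1 * ‖u‖ := by rw [h12]
      _ = ‖u‖ := one_mul _
  linarith


set_option maxHeartbeats 1000000 in
/-- Uniformly bounded pseudo-inverse of the limiting Hessian. -/
theorem bounded_pseudoinverse_of_limiting_hessian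
    {p d : ℕ} (g : Euc p × Euc d → ℝ)
    (hg : ContDiff ℝ 3 g) (hmb : IsParamMorseBott g)
    (hsm : SmoothInY g) (hco : CoerciveInY g)
    (φflow : ℝ → Euc p → Euc d → Euc d) (φsel : Euc p → Euc d → Euc d)
    (hφ : IsFlowSelection g φflow φsel)
    (x₀ : Euc p) (y : Euc d)
    (hmin : IsLocalMin (fun y' => g (x₀, y')) (φsel x₀ y)) :
    ∃ (U : Set (Euc p)) (lam : ℝ), IsOpen U ∧ x₀ ∈ U ∧ 0 < lam ∧
      ∀ x ∈ U, ∀ Adag : Euc d →L[ℝ] Euc d,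
        IsMPInv (hessYY g x (φsel x y)) Adag → lam * ‖Adag‖ ≤ 1 := by
  classical
  by_contra hcon
  push_neg at hcon
  obtain ⟨⟨hφ0, hφder⟩, hφlim⟩ := hφ
  obtain ⟨r, hr, R, hyR, hbound⟩ := traj_in_ball hg x₀ (hco x₀) y
  -- every selected point is critical
  have hcritall : ∀ x : Euc p, gradY g x (φsel x y) = 0 := by
    intro x
    exact limit_critical hg x (fun t => φflow t x y)
      (fun t ht => hφder x y t ht) (φsel x y) (hφlim x y)
  -- selected points near x₀ stay in a compact ball
  have hselbound : ∀ x ∈ ball x₀ r, ‖φsel x y‖ ≤ R := by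
    intro x hx
    have hb := hbound x hx (fun t => φflow t x y) (hφ0 x y) (fun t ht => hφder x y t ht)
    have hnorm : Tendsto (fun t => ‖φflow t x y‖) atTop (𝓝 ‖φsel x y‖) :=
      (continuous_norm.tendsto _).comp (hφlim x y)
    apply le_of_tendsto hnorm
    filter_upwards [eventually_ge_atTop (0:ℝ)] with t ht
    exact le_of_lt (hb t ht)
  -- extract bad sequence
  have hsel : ∀ n : ℕ, ∃ x, x ∈ ball x₀ (min r ((n:ℝ)+1)⁻¹) ∧
      ∃ Adag : Euc d →L[ℝ] Euc d, IsMPInv (hessYY g x (φsel x y)) Adag ∧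
        1 < ((n:ℝ)+1)⁻¹ * ‖Adag‖ := by
    intro n
    have hposmin : (0:ℝ) < min r ((n:ℝ)+1)⁻¹ := lt_min hr (by positivity)
    obtain ⟨x, hx, Adag, hAdag, hgt⟩ := hcon (ball x₀ (min r ((n:ℝ)+1)⁻¹)) ((n:ℝ)+1)⁻¹
      isOpen_ball (mem_ball_self hposmin) (by positivity)
    exact ⟨x, hx, Adag, hAdag, hgt⟩
  choose xs hxs Bs hBs hBgt using hsel
  have hxsr : ∀ n, xs n ∈ ball x₀ r :=
    fun n => mem_of_mem_of_subset (hxs n) (ball_subset_ball (min_le_left _ _))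
  have hxstend : Tendsto xs atTop (𝓝 x₀) := by
    rw [tendsto_iff_dist_tendsto_zero]
    apply squeeze_zero (fun n => dist_nonneg)
      (fun n => le_of_lt (lt_of_lt_of_le (mem_ball.1 (hxs n)) (min_le_right _ _)))
    exact tendsto_one_div_add_atTop_nhds_zero_nat.congr (fun n => by
      rw [one_div])
  set ys : ℕ → Euc d := fun n => φsel (xs n) y with hys
  have hysmem : ∀ n, ys n ∈ closedBall (0 : Euc d) R := by
    intro n
    rw [mem_closedBall, dist_zero_right]
    exact hselbound (xs n) (hxsr n)
  obtain ⟨ystar, hystar, σ, hσmono, hσtend⟩ :=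
    (isCompact_closedBall (0:Euc d) R).tendsto_subseq hysmem
  have hσatTop : Tendsto σ atTop atTop := hσmono.tendsto_atTop
  set zseq : ℕ → Euc p × Euc d := fun m => (xs (σ m), ys (σ m)) with hzseq
  set zs : Euc p × Euc d := (x₀, ystar) with hzs
  have hzlim : Tendsto zseq atTop (𝓝 zs) :=
    (hxstend.comp hσatTop).prodMk_nhds hσtend
  have hcritseq : ∀ m, zseq m ∈ augCrit g := by
    intro m
    show gradY g (xs (σ m)) (ys (σ m)) = 0
    exact hcritall (xs (σ m))
  have hzscrit : zs ∈ augCrit g := by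
    have hclosed : IsClosed (augCrit g) := by
      have : augCrit g = (Gmap g) ⁻¹' {0} := rfl
      rw [this]
      exact IsClosed.preimage (gradY_continuous hg) isClosed_singleton
    exact hclosed.mem_of_tendsto hzlim (Eventually.of_forall hcritseq)
  -- large pseudoinverses along the subsequence
  apply no_blowup hg hmb hzscrit hcritseq hzlim (Bseq := fun m => Bs (σ m))
    (fun m => hBs (σ m))
  intro m
  have h1 : 1 < ((σ m : ℝ)+1)⁻¹ * ‖Bs (σ m)‖ := hBgt (σ m)
  have hpos : (0:ℝ) < (σ m : ℝ) + 1 := by positivity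
  rw [← div_eq_inv_mul] at h1
  have h2 : ((σ m : ℝ)+1) < ‖Bs (σ m)‖ := (one_lt_div hpos).1 h1
  have h3 : (m:ℝ) ≤ (σ m : ℝ) := Nat.cast_le.2 (hσmono.le_apply)
  linarith

end
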